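/- arXiv:1910.05323 — 3 statements merged into one kernel-verified Lean document; each statement's English description precedes it below -/
import Mathlib

section
/- If f and g are functions in L^2(ℝ) whose Fourier transforms are supported in (-∞,0], then the Fourier transform of the product fg (which lies in L^1(ℝ)) is also supported in (-∞,0]. In other words, the class of holomorphic functions (those with Fourier support in the negative half-line) is closed under pointwise multiplication. -/
open MeasureTheory Complex Real Filter Metric
open scoped FourierTransform ENNReal Topology

private lemma translate_memℒp {p : ℝ≥0∞} {b : ℝ → ℂ} (hb : MemLp b p (volume : Measure ℝ))
    (z : ℝ) : MemLp (fun x => b (x - z)) p (volume : Measure ℝ) :=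
  hb.comp_measurePreserving (measurePreserving_sub_right volume z)

private lemma translate_eLpNorm {p : ℝ≥0∞} {b : ℝ → ℂ}
    (hb : AEStronglyMeasurable b (volume : Measure ℝ)) (z : ℝ) :
    eLpNorm (fun x => b (x - z)) p (volume : Measure ℝ) = eLpNorm b p volume :=
  eLpNorm_comp_measurePreserving hb (measurePreserving_sub_right volume z)

private lemma tendsto_translate_L2 {b : ℝ → ℂ} (hb : MemLp b 2 (volume : Measure ℝ)) :
    Tendsto (fun z : ℝ => eLpNorm (fun x => b (x - z) - b x) 2 volume) (𝓝 0) (𝓝 0) := by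
  rw [ENNReal.tendsto_nhds_zero]
  intro ε hε
  have hε3 : (ε / 3 : ℝ≥0∞) ≠ 0 := by
    rw [ne_eq, ENNReal.div_eq_zero_iff]
    push_neg
    exact ⟨hε.ne', by norm_num⟩
  obtain ⟨c, hc_supp, hbc, hc_cont, hc_mem⟩ :=
    hb.exists_hasCompactSupport_eLpNorm_sub_le (p := 2) (by norm_num) hε3
  -- the compact set
  set K : Set ℝ := Metric.cthickening 1 (tsupport c) with hK
  have hK_compact : IsCompact K := hc_supp.cthickening
  have hK_meas : MeasurableSet K := hK_compact.isClosed.measurableSet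
  have hK_vol : volume K ≠ ⊤ := hK_compact.measure_lt_top.ne
  set m : ℝ≥0∞ := volume K ^ (1 / (2 : ℝ≥0∞).toReal) with hm
  have hm_top : m ≠ ⊤ := by
    rw [hm]
    exact (ENNReal.rpow_lt_top_of_nonneg (by norm_num) hK_vol).ne
  -- choose η
  set r : ℝ≥0∞ := min (ε / 3) 1 with hr
  have hr0 : r ≠ 0 := (lt_min (zero_lt_iff.mpr hε3) zero_lt_one).ne'
  have hrtop : r ≠ ⊤ := by simp [hr]
  set η : ℝ := (r / (m + 1)).toReal with hη
  have hη0 : 0 < η := by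
    rw [hη]
    apply ENNReal.toReal_pos
    · rw [ne_eq, ENNReal.div_eq_zero_iff]
      push_neg
      exact ⟨hr0, by simp [ENNReal.add_eq_top, hm_top]⟩
    · exact (ENNReal.div_lt_top hrtop (by simp)).ne
  have hηm : ENNReal.ofReal η * m ≤ r := by
    rw [hη, ENNReal.ofReal_toReal (ENNReal.div_lt_top hrtop (by simp)).ne]
    calc r / (m + 1) * m ≤ r / (m + 1) * (m + 1) := by gcongr; exact le_self_add
    _ = r := ENNReal.div_mul_cancel (by simp) (by simp [hm_top])
  -- uniform continuity of c
  have huc : UniformContinuous c := hc_supp.uniformContinuous_of_continuous hc_cont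
  rw [Metric.uniformContinuous_iff] at huc
  obtain ⟨δ, hδ0, hδ⟩ := huc η hη0
  -- the eventual bound
  filter_upwards [Metric.ball_mem_nhds (0 : ℝ) (lt_min hδ0 one_pos)] with z hz
  rw [Metric.mem_ball, Real.dist_eq, sub_zero] at hz
  have hzδ : |z| < δ := lt_of_lt_of_le hz (min_le_left _ _)
  have hz1 : |z| ≤ 1 := le_of_lt (lt_of_lt_of_le hz (min_le_right _ _))
  -- three-term decomposition
  have hmeas_b : AEStronglyMeasurable b volume := hb.aestronglyMeasurable
  have hmeas_bz : AEStronglyMeasurable (fun x => b (x - z)) volume :=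
    (translate_memℒp hb z).aestronglyMeasurable
  have h1 : eLpNorm (fun x => b (x - z) - c (x - z)) 2 volume ≤ ε / 3 := by
    have : (fun x => b (x - z) - c (x - z)) = (b - c) ∘ (fun x => x - z) := rfl
    rw [this, eLpNorm_comp_measurePreserving (hmeas_b.sub hc_cont.aestronglyMeasurable)
      (measurePreserving_sub_right volume z)]
    exact hbc
  have h3 : eLpNorm (fun x => c x - b x) 2 volume ≤ ε / 3 := by
    have : (fun x => c x - b x) = c - b := rfl
    rw [this, eLpNorm_sub_comm]
    exact hbc
  have h2 : eLpNorm (fun x => c (x - z) - c x) 2 volume ≤ ε / 3 := by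
    have hb2 : ∀ x : ℝ, ‖c (x - z) - c x‖ ≤ ‖K.indicator (fun _ => η) x‖ := by
      intro x
      by_cases hx : x ∈ K
      · rw [Set.indicator_of_mem hx]
        have := hδ (a := x - z) (b := x) (by rw [Real.dist_eq]; simpa using hzδ)
        rw [Real.norm_eq_abs, abs_of_pos hη0]
        exact le_of_lt (by simpa [dist_eq_norm] using this)
      · rw [Set.indicator_of_notMem hx]
        have hx1 : x ∉ tsupport c := fun h => hx (Metric.self_subset_cthickening _ h)
        have hx2 : x - z ∉ tsupport c := by
          intro h
          exact hx (Metric.mem_cthickening_of_dist_le x (x - z) 1 _ h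
            (by rw [Real.dist_eq]; simpa using hz1))
        simp [image_eq_zero_of_notMem_tsupport hx1, image_eq_zero_of_notMem_tsupport hx2]
    calc eLpNorm (fun x => c (x - z) - c x) 2 volume
        ≤ eLpNorm (K.indicator (fun _ => η)) 2 volume := eLpNorm_mono hb2
      _ = ‖η‖ₑ * volume K ^ (1 / (2 : ℝ≥0∞).toReal) :=
          eLpNorm_indicator_const hK_meas (by norm_num) (by norm_num)
      _ = ENNReal.ofReal η * m := by
          rw [hm]; congr 1
          simp [Real.enorm_eq_ofReal hη0.le]
      _ ≤ r := hηm
      _ ≤ ε / 3 := min_le_left _ _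
  have hdecomp : (fun x => b (x - z) - b x) =
      (fun x => b (x - z) - c (x - z)) + ((fun x => c (x - z) - c x) + (fun x => c x - b x)) := by
    funext x; simp only [Pi.add_apply]; ring
  calc eLpNorm (fun x => b (x - z) - b x) 2 volume
      ≤ eLpNorm (fun x => b (x - z) - c (x - z)) 2 volume +
        eLpNorm ((fun x => c (x - z) - c x) + (fun x => c x - b x)) 2 volume := by
        rw [hdecomp]
        exact eLpNorm_add_le
          (hmeas_bz.sub ((hc_cont.comp (continuous_id.sub continuous_const)).aestronglyMeasurable))
          (((hc_cont.comp (continuous_id.sub continuous_const)).aestronglyMeasurable.sub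
            hc_cont.aestronglyMeasurable).add (hc_cont.aestronglyMeasurable.sub hmeas_b))
          (by norm_num)
    _ ≤ eLpNorm (fun x => b (x - z) - c (x - z)) 2 volume +
        (eLpNorm (fun x => c (x - z) - c x) 2 volume + eLpNorm (fun x => c x - b x) 2 volume) := by
        gcongr
        exact eLpNorm_add_le
          ((hc_cont.comp (continuous_id.sub continuous_const)).aestronglyMeasurable.sub
            hc_cont.aestronglyMeasurable)
          (hc_cont.aestronglyMeasurable.sub hmeas_b) (by norm_num)
    _ ≤ ε / 3 + (ε / 3 + ε / 3) := by gcongr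
    _ ≤ ε := by
        rcases eq_or_ne ε ⊤ with h|h
        · simp [h]
        · rw [← add_assoc, ENNReal.div_add_div_same, ENNReal.div_add_div_same]
          exact ENNReal.div_le_of_le_mul (by rw [mul_comm]; exact le_of_eq (by ring))


-- L¹ × L² pairing integrability (Hölder)
private lemma mul_integrable {f b : ℝ → ℂ} (hf2 : MemLp f 2 (volume : Measure ℝ))
    (hb2 : MemLp b 2 (volume : Measure ℝ)) :
    Integrable (fun x => f x * b x) (volume : Measure ℝ) := by
  have h := hb2.smul (φ := f) (r := 1) hf2
  rw [← memLp_one_iff_integrable]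
  exact h

-- product integrability of (x,w) ↦ f x * b (x - w)
private lemma prod_integrable {f b : ℝ → ℂ} (hf : Integrable f (volume : Measure ℝ))
    (hb : Integrable b (volume : Measure ℝ)) :
    Integrable (fun p : ℝ × ℝ => f p.1 * b (p.1 - p.2))
      ((volume : Measure ℝ).prod (volume : Measure ℝ)) := by
  have hT : MeasurePreserving (fun p : ℝ × ℝ => (p.1, p.1 - p.2))
      ((volume : Measure ℝ).prod volume) ((volume : Measure ℝ).prod volume) := by
    have h1 := measurePreserving_prod_sub (volume : Measure ℝ) volume
    have h2 : MeasurePreserving (Prod.map (id : ℝ → ℝ) (fun x : ℝ => -x))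
        ((volume : Measure ℝ).prod volume) ((volume : Measure ℝ).prod volume) :=
      (MeasurePreserving.id volume).prod (Measure.measurePreserving_neg volume)
    have h3 := h2.comp h1
    convert h3 using 1
    funext p
    simp [Prod.map, neg_sub]
  have hbase : Integrable (fun q : ℝ × ℝ => f q.1 * b q.2)
      ((volume : Measure ℝ).prod volume) := hf.mul_prod hb
  have := (hT.integrable_comp hbase.aestronglyMeasurable).mpr hbase
  exact this

private lemma prod_integrable' {f b : ℝ → ℂ} (hf : Integrable f (volume : Measure ℝ))
    (hb : Integrable b (volume : Measure ℝ)) :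
    Integrable (fun p : ℝ × ℝ => f p.2 * b (p.2 - p.1))
      ((volume : Measure ℝ).prod (volume : Measure ℝ)) := by
  have h := prod_integrable hf hb
  have hswap := (Measure.measurePreserving_swap
    (μ := (volume : Measure ℝ)) (ν := (volume : Measure ℝ)))
  exact (hswap.integrable_comp h.aestronglyMeasurable).mpr h

private lemma Phi_integrable {f b : ℝ → ℂ} (hf : Integrable f (volume : Measure ℝ))
    (hb : Integrable b (volume : Measure ℝ)) :
    Integrable (fun w : ℝ => ∫ x : ℝ, f x * b (x - w)) (volume : Measure ℝ) :=
  (prod_integrable hf hb).integral_prod_right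

-- Cauchy–Schwarz bound for the pairing
private lemma pairing_bound {f G : ℝ → ℂ} (hf2 : MemLp f 2 (volume : Measure ℝ))
    (hG2 : MemLp G 2 (volume : Measure ℝ)) :
    ‖∫ x : ℝ, f x * G x‖ ≤
      (eLpNorm (fun x => (starRingEnd ℂ) (f x)) 2 volume).toReal *
        (eLpNorm G 2 volume).toReal := by
  have hF2 : MemLp (fun x => (starRingEnd ℂ) (f x)) 2 (volume : Measure ℝ) := by
    refine hf2.of_le ?_ (Eventually.of_forall fun x => by simp)
    exact (RCLike.continuous_conj (K := ℂ)).comp_aestronglyMeasurable hf2.aestronglyMeasurable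
  have hinner : (inner ℂ (hF2.toLp _) (hG2.toLp G) : ℂ) = ∫ x : ℝ, f x * G x := by
    rw [MeasureTheory.L2.inner_def]
    apply integral_congr_ae
    filter_upwards [hF2.coeFn_toLp, hG2.coeFn_toLp] with x h1 h2
    rw [h1, h2]
    simp [RCLike.inner_apply, mul_comm]
  calc ‖∫ x : ℝ, f x * G x‖ = ‖(inner ℂ (hF2.toLp _) (hG2.toLp G) : ℂ)‖ := by rw [hinner]
    _ ≤ ‖hF2.toLp _‖ * ‖hG2.toLp G‖ := norm_inner_le_norm _ _
    _ = _ := by rw [Lp.norm_toLp, Lp.norm_toLp]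

private lemma Phi_contAt {f b : ℝ → ℂ}
    (hf2 : MemLp f 2 (volume : Measure ℝ)) (hb2 : MemLp b 2 (volume : Measure ℝ)) :
    ContinuousAt (fun w : ℝ => ∫ x : ℝ, f x * b (x - w)) 0 := by
  set Φ := fun w : ℝ => ∫ x : ℝ, f x * b (x - w) with hΦ
  set C := (eLpNorm (fun x => (starRingEnd ℂ) (f x)) 2 volume).toReal with hC
  have key : ∀ z : ℝ, ‖Φ z - Φ 0‖ ≤
      C * (eLpNorm (fun x => b (x - z) - b x) 2 volume).toReal := by
    intro z
    have hbz : MemLp (fun x => b (x - z)) 2 (volume : Measure ℝ) :=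
      hb2.comp_measurePreserving (measurePreserving_sub_right volume z)
    have hint1 : Integrable (fun x => f x * b (x - z)) volume := mul_integrable hf2 hbz
    have hint2 : Integrable (fun x => f x * b x) volume := mul_integrable hf2 hb2
    have hsub : Φ z - Φ 0 = ∫ x : ℝ, f x * (b (x - z) - b x) := by
      rw [hΦ]
      simp only [sub_zero]
      rw [← integral_sub hint1 hint2]
      congr 1
      funext x
      ring
    rw [hsub]
    exact pairing_bound hf2 (hbz.sub hb2)
  rw [ContinuousAt, tendsto_iff_norm_sub_tendsto_zero]
  have hts : Tendsto (fun z : ℝ =>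
      C * (eLpNorm (fun x => b (x - z) - b x) 2 volume).toReal) (𝓝 0) (𝓝 0) := by
    have h0 := tendsto_translate_L2 hb2
    have h1 : Tendsto (fun z : ℝ =>
        (eLpNorm (fun x => b (x - z) - b x) 2 volume).toReal) (𝓝 0) (𝓝 0) := by
      have h2 := (ENNReal.tendsto_toReal (a := 0) (by simp)).comp h0
      exact h2
    have h3 := h1.const_mul C
    simpa using h3
  exact squeeze_zero (fun z => norm_nonneg _) key hts



private lemma chain {f b : ℝ → ℂ} (hf1 : Integrable f (volume : Measure ℝ))
    (hb1 : Integrable b (volume : Measure ℝ))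
    (hvanish : ∀ s : ℝ, 𝓕 f s * 𝓕 b (-s) = 0) {c : ℝ} (hc : 0 < c) :
    ∫ w : ℝ, ((π * c : ℂ) ^ ((Module.finrank ℝ ℝ : ℂ) / 2) *
        cexp (-(π : ℂ) ^ 2 * c * ‖(0 : ℝ) - w‖ ^ 2)) • (∫ x : ℝ, f x * b (x - w)) = 0 := by
  have hπc : (0 : ℝ) < π * c := mul_pos Real.pi_pos hc
  set t : ℝ := (π * c)⁻¹ with hts
  have ht : 0 < t := inv_pos.mpr hπc
  set γ : ℝ → ℂ := fun s : ℝ => cexp (-↑π * ↑t * (s : ℂ) ^ 2) with hγdef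
  have hγ : Integrable γ (volume : Measure ℝ) := by
    have h := integrable_cexp_neg_mul_sq (b := ((π * t : ℝ) : ℂ)) (by simp [mul_pos Real.pi_pos ht])
    apply h.congr
    filter_upwards with s
    rw [hγdef]
    push_cast
    ring_nf
  have hγbound : ∀ w : ℝ, ‖𝓕 γ w‖ ≤ ∫ s : ℝ, ‖γ s‖ :=
    fun w => VectorFourier.norm_fourierIntegral_le_integral_norm _ _ _ _ _
  have hγcont : Continuous (𝓕 γ) :=
    VectorFourier.fourierIntegral_continuous Real.continuous_fourierChar (by simpa only [innerₗ_apply_apply] using continuous_inner) hγ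
  have hbcont : Continuous (𝓕 b) :=
    VectorFourier.fourierIntegral_continuous Real.continuous_fourierChar (by simpa only [innerₗ_apply_apply] using continuous_inner) hb1
  have hbbound : ∀ s : ℝ, ‖𝓕 b s‖ ≤ ∫ y : ℝ, ‖b y‖ :=
    fun s => VectorFourier.norm_fourierIntegral_le_integral_norm _ _ _ _ _
  -- the Gaussian weight equals 𝓕 γ
  have hK : ∀ w : ℝ, ((π * c : ℂ) ^ ((Module.finrank ℝ ℝ : ℂ) / 2) *
      cexp (-(π : ℂ) ^ 2 * c * ‖(0 : ℝ) - w‖ ^ 2)) = 𝓕 γ w := by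
    intro w
    have hFT := fourier_gaussian_pi (b := (t : ℂ)) (by simpa using ht)
    have h1 : 𝓕 γ w = 1 / (t : ℂ) ^ (1 / 2 : ℂ) * cexp (-(π : ℂ) / t * w ^ 2) := by
      rw [hγdef]
      exact congrFun hFT w
    rw [h1]
    congr 1
    · -- (πc)^(1/2) = 1 / t^(1/2)
      have hfr : ((Module.finrank ℝ ℝ : ℂ) / 2) = (1 / 2 : ℂ) := by
        rw [Module.finrank_self]
        norm_num
      rw [hfr]
      have htc : (t : ℂ) = (((π * c : ℝ)) : ℂ)⁻¹ := by
        rw [hts]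
        push_cast
        ring
      rw [htc, Complex.inv_cpow _ _ (by
        rw [Complex.arg_ofReal_of_nonneg hπc.le]
        exact Real.pi_ne_zero.symm)]
      conv_rhs => rw [div_eq_mul_inv, inv_inv, one_mul]
      push_cast
      rfl
    · -- exponents agree
      congr 1
      have hw : ((‖(0 : ℝ) - w‖ : ℝ) : ℂ) ^ 2 = (w : ℂ) ^ 2 := by
        rw [zero_sub, norm_neg, Real.norm_eq_abs, ← ofReal_pow, _root_.sq_abs, ofReal_pow]
      rw [hw, hts]
      push_cast
      rw [div_eq_mul_inv, inv_inv]
      ring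
  simp_rw [hK, smul_eq_mul]
  -- Step A : swap to ∫ x, f x * (∫ w, 𝓕 γ w * b (x - w))
  have hIntA : Integrable (fun p : ℝ × ℝ => 𝓕 γ p.1 * (f p.2 * b (p.2 - p.1)))
      ((volume : Measure ℝ).prod volume) := by
    have h0 := prod_integrable' hf1 hb1
    have h := h0.bdd_mul ((hγcont.comp continuous_fst).aestronglyMeasurable)
      (c := ∫ s : ℝ, ‖γ s‖) (Eventually.of_forall fun p => hγbound p.1)
    exact h
  have stepA : (∫ w : ℝ, 𝓕 γ w * ∫ x : ℝ, f x * b (x - w)) =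
      ∫ x : ℝ, f x * ∫ w : ℝ, 𝓕 γ w * b (x - w) := by
    have h1 : (∫ w : ℝ, 𝓕 γ w * ∫ x : ℝ, f x * b (x - w)) =
        ∫ w : ℝ, ∫ x : ℝ, 𝓕 γ w * (f x * b (x - w)) := by
      congr 1; funext w; rw [integral_const_mul]
    have h2 := integral_integral_swap (f := fun w x => 𝓕 γ w * (f x * b (x - w))) hIntA
    rw [h1, h2]
    congr 1; funext x
    rw [← integral_const_mul]
    congr 1; funext w
    ring
  -- Step B : change of variables in the inner integral
  have stepB : ∀ x : ℝ, (∫ w : ℝ, 𝓕 γ w * b (x - w)) = ∫ y : ℝ, 𝓕 γ (x - y) * b y := by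
    intro x
    have h := integral_sub_left_eq_self (fun w => 𝓕 γ w * b (x - w)) volume x
    rw [← h]
    congr 1; funext y
    simp [sub_sub_cancel]
  -- Step C : expand 𝓕 γ (x - y) and swap
  have stepC : ∀ x : ℝ, (∫ y : ℝ, 𝓕 γ (x - y) * b y) =
      ∫ s : ℝ, γ s * cexp (↑(-2 * π * s * x) * I) * 𝓕 b (-s) := by
    intro x
    have hIntC : Integrable (fun p : ℝ × ℝ =>
        cexp (↑(-2 * π * p.2 * (x - p.1)) * I) * γ p.2 * b p.1)
        ((volume : Measure ℝ).prod volume) := by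
      have h0 : Integrable (fun p : ℝ × ℝ => b p.1 * γ p.2)
          ((volume : Measure ℝ).prod volume) := hb1.mul_prod hγ
      have hcontk : Continuous (fun p : ℝ × ℝ => cexp (↑(-2 * π * p.2 * (x - p.1)) * I)) := by
        fun_prop
      have h := h0.bdd_mul hcontk.aestronglyMeasurable
        (c := 1) (Eventually.of_forall fun p => by rw [norm_exp_ofReal_mul_I])
      apply h.congr
      filter_upwards with p
      ring
    have h1 : (∫ y : ℝ, 𝓕 γ (x - y) * b y) =
        ∫ y : ℝ, ∫ s : ℝ, cexp (↑(-2 * π * s * (x - y)) * I) * γ s * b y := by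
      congr 1; funext y
      rw [Real.fourier_real_eq_integral_exp_smul]
      simp_rw [smul_eq_mul]
      rw [← integral_mul_const]
    have h2 := integral_integral_swap
      (f := fun y s => cexp (↑(-2 * π * s * (x - y)) * I) * γ s * b y) hIntC
    rw [h1, h2]
    congr 1; funext s
    have h3 : ∀ y : ℝ, cexp (↑(-2 * π * s * (x - y)) * I) * γ s * b y =
        (γ s * cexp (↑(-2 * π * s * x) * I)) * (cexp (↑(2 * π * y * s) * I) * b y) := by
      intro y
      rw [show (↑(-2 * π * s * (x - y)) * I : ℂ) =
        ↑(-2 * π * s * x) * I + ↑(2 * π * y * s) * I by push_cast; ring, Complex.exp_add]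
      ring
    simp_rw [h3]
    rw [integral_const_mul]
    have h4 : (∫ y : ℝ, cexp (↑(2 * π * y * s) * I) * b y) = 𝓕 b (-s) := by
      have harg : ∀ y : ℝ, (↑(-2 * π * y * (-s)) * I : ℂ) = ↑(2 * π * y * s) * I := by
        intro y; push_cast; ring
      rw [Real.fourier_real_eq_integral_exp_smul]
      simp_rw [smul_eq_mul, harg]
    rw [h4]
  -- Step D : swap the outer pair
  have stepD : (∫ x : ℝ, f x * ∫ s : ℝ, γ s * cexp (↑(-2 * π * s * x) * I) * 𝓕 b (-s)) =
      ∫ s : ℝ, γ s * 𝓕 b (-s) * 𝓕 f s := by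
    have hIntD : Integrable (fun p : ℝ × ℝ =>
        f p.1 * (γ p.2 * cexp (↑(-2 * π * p.2 * p.1) * I) * 𝓕 b (-p.2)))
        ((volume : Measure ℝ).prod volume) := by
      have h0 : Integrable (fun p : ℝ × ℝ => f p.1 * γ p.2)
          ((volume : Measure ℝ).prod volume) := hf1.mul_prod hγ
      have hcontk : Continuous (fun p : ℝ × ℝ =>
          cexp (↑(-2 * π * p.2 * p.1) * I) * 𝓕 b (-p.2)) := by
        apply Continuous.mul
        · fun_prop
        · exact hbcont.comp (continuous_snd.neg)
      have h := h0.bdd_mul hcontk.aestronglyMeasurable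
        (c := ∫ y : ℝ, ‖b y‖) (Eventually.of_forall fun p => by
          rw [norm_mul, norm_exp_ofReal_mul_I, one_mul]
          exact hbbound _)
      apply h.congr
      filter_upwards with p
      ring
    have h1 : (∫ x : ℝ, f x * ∫ s : ℝ, γ s * cexp (↑(-2 * π * s * x) * I) * 𝓕 b (-s)) =
        ∫ x : ℝ, ∫ s : ℝ, f x * (γ s * cexp (↑(-2 * π * s * x) * I) * 𝓕 b (-s)) := by
      congr 1; funext x
      rw [integral_const_mul]
    have h2 := integral_integral_swap
      (f := fun x s => f x * (γ s * cexp (↑(-2 * π * s * x) * I) * 𝓕 b (-s))) hIntD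
    rw [h1, h2]
    congr 1; funext s
    have h3 : ∀ x : ℝ, f x * (γ s * cexp (↑(-2 * π * s * x) * I) * 𝓕 b (-s)) =
        (γ s * 𝓕 b (-s)) * (cexp (↑(-2 * π * x * s) * I) * f x) := by
      intro x
      rw [show (↑(-2 * π * s * x) * I : ℂ) = ↑(-2 * π * x * s) * I by push_cast; ring]
      ring
    simp_rw [h3]
    rw [integral_const_mul]
    have h4 : (∫ x : ℝ, cexp (↑(-2 * π * x * s) * I) * f x) = 𝓕 f s := by
      rw [Real.fourier_real_eq_integral_exp_smul]
      simp_rw [smul_eq_mul]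
    rw [h4]
  calc (∫ w : ℝ, 𝓕 γ w * ∫ x : ℝ, f x * b (x - w))
      = ∫ x : ℝ, f x * ∫ w : ℝ, 𝓕 γ w * b (x - w) := stepA
    _ = ∫ x : ℝ, f x * ∫ s : ℝ, γ s * cexp (↑(-2 * π * s * x) * I) * 𝓕 b (-s) := by
        congr 1; funext x; rw [stepB x, stepC x]
    _ = ∫ s : ℝ, γ s * 𝓕 b (-s) * 𝓕 f s := stepD
    _ = 0 := by
        have : ∀ s : ℝ, γ s * 𝓕 b (-s) * 𝓕 f s = 0 := fun s => by
          rw [mul_assoc, mul_comm (𝓕 b (-s)), hvanish s, mul_zero]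
        simp_rw [this, integral_zero]


private lemma pairing_eq_zero {f b : ℝ → ℂ}
    (hf1 : Integrable f (volume : Measure ℝ)) (hf2 : MemLp f 2 (volume : Measure ℝ))
    (hb1 : Integrable b (volume : Measure ℝ)) (hb2 : MemLp b 2 (volume : Measure ℝ))
    (hvanish : ∀ s : ℝ, 𝓕 f s * 𝓕 b (-s) = 0) :
    ∫ x : ℝ, f x * b x = 0 := by
  have hint : Integrable (fun w : ℝ => ∫ x : ℝ, f x * b (x - w)) volume :=
    Phi_integrable hf1 hb1
  have hcont : ContinuousAt (fun w : ℝ => ∫ x : ℝ, f x * b (x - w)) 0 :=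
    Phi_contAt hf2 hb2
  have htend := Real.tendsto_integral_gaussian_smul' hint hcont
  have heq : (fun c : ℝ => ∫ w : ℝ, ((π * c : ℂ) ^ ((Module.finrank ℝ ℝ : ℂ) / 2) *
      cexp (-(π : ℂ) ^ 2 * c * ‖(0 : ℝ) - w‖ ^ 2)) • (∫ x : ℝ, f x * b (x - w)))
      =ᶠ[atTop] (fun _ => (0 : ℂ)) := by
    filter_upwards [Ioi_mem_atTop (0 : ℝ)] with c hc
    exact chain hf1 hb1 hvanish hc
  have h0 : Tendsto (fun _ : ℝ => (0 : ℂ)) atTop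
      (𝓝 (∫ x : ℝ, f x * b (x - (0 : ℝ)))) := Tendsto.congr' heq htend
  have hΦ0 : (∫ x : ℝ, f x * b (x - (0 : ℝ))) = 0 :=
    tendsto_nhds_unique h0 tendsto_const_nhds
  rw [← hΦ0]
  congr 1
  funext x
  rw [sub_zero]


/-- If `f` and `g` are functions in `L²(ℝ)` (also integrable, so that
their Fourier transforms are defined pointwise) whose Fourier transforms are supported in
`(-∞, 0]`, then the product `f·g` lies in `L¹(ℝ)` and its Fourier transform is also
supported in `(-∞, 0]`: the class of holomorphic functions is closed under multiplication. -/
theorem holomorphic_closed_under_mul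
    (f g : ℝ → ℂ)
    (hf1 : Integrable f) (hf2 : MemLp f 2 (volume : Measure ℝ))
    (hg1 : Integrable g) (hg2 : MemLp g 2 (volume : Measure ℝ))
    (hfsupp : Function.support (𝓕 f) ⊆ Set.Iic (0 : ℝ))
    (hgsupp : Function.support (𝓕 g) ⊆ Set.Iic (0 : ℝ)) :
    Integrable (fun x => f x * g x) ∧
      Function.support (𝓕 (fun x => f x * g x)) ⊆ Set.Iic (0 : ℝ) := by
  refine ⟨mul_integrable hf2 hg2, ?_⟩
  rw [Function.support_subset_iff']
  intro ξ hξ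
  rw [Set.mem_Iic, not_le] at hξ
  -- the modulated function b
  set b : ℝ → ℂ := fun x => cexp (↑(-2 * π * x * ξ) * I) * g x with hbdef
  have hmeasb : AEStronglyMeasurable b (volume : Measure ℝ) := by
    apply AEStronglyMeasurable.mul _ hg1.aestronglyMeasurable
    apply Continuous.aestronglyMeasurable
    fun_prop
  have hb1 : Integrable b (volume : Measure ℝ) := by
    apply hg1.bdd_mul (c := 1) _ (Eventually.of_forall fun x => by
      rw [norm_exp_ofReal_mul_I])
    apply Continuous.aestronglyMeasurable
    fun_prop
  have hb2 : MemLp b 2 (volume : Measure ℝ) := by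
    refine hg2.of_le hmeasb (Eventually.of_forall fun x => ?_)
    rw [hbdef]
    simp only [norm_mul, norm_exp_ofReal_mul_I, one_mul]
    exact le_refl _
  -- Fourier transform of b is a shift of that of g
  have hFTb : ∀ s : ℝ, 𝓕 b s = 𝓕 g (s + ξ) := by
    intro s
    rw [Real.fourier_real_eq_integral_exp_smul,
      Real.fourier_real_eq_integral_exp_smul]
    congr 1
    funext x
    rw [hbdef, smul_eq_mul, smul_eq_mul, ← mul_assoc, ← Complex.exp_add]
    congr 2
    push_cast
    ring
  have hvanish : ∀ s : ℝ, 𝓕 f s * 𝓕 b (-s) = 0 := by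
    intro s
    rcases le_or_gt s 0 with hs | hs
    · have : 𝓕 g (-s + ξ) = 0 := by
        by_contra h
        have := hgsupp (Function.mem_support.mpr h)
        rw [Set.mem_Iic] at this
        linarith
      rw [hFTb, this, mul_zero]
    · have : 𝓕 f s = 0 := by
        by_contra h
        have := hfsupp (Function.mem_support.mpr h)
        rw [Set.mem_Iic] at this
        linarith
      rw [this, zero_mul]
  have hzero := pairing_eq_zero hf1 hf2 hb1 hb2 hvanish
  rw [Real.fourier_real_eq_integral_exp_smul]
  rw [← hzero]
  congr 1
  funext x
  rw [hbdef, smul_eq_mul]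
  ring
end

section
/- If f and g are in L^2(ℝ) and both have Fourier transforms supported in (-∞,0], then ∫_ℝ f(α) g(α) dα = 0. -/
open MeasureTheory Complex
open scoped FourierTransform

section Aux

open Filter Real
open scoped ComplexConjugate ENNReal

/-- The pairing `t ↦ ∫ f x * g (x - t)` of two `L²` functions is continuous. -/
lemma continuous_pairing_aux (f g : ℝ → ℂ) (hf2 : MemLp f 2 (volume : Measure ℝ))
    (hg2 : MemLp g 2 (volume : Measure ℝ)) :
    Continuous (fun t : ℝ => ∫ x : ℝ, f x * g (x - t)) := by
  haveI : Fact ((1:ℝ≥0∞) ≤ 2) := ⟨one_le_two⟩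
  have hcf : MemLp (fun x => conj (f x)) 2 (volume : Measure ℝ) :=
    hf2.of_le (Complex.continuous_conj.comp_aestronglyMeasurable hf2.1)
      (Filter.Eventually.of_forall fun x => by simp)
  set F : Lp ℂ 2 (volume : Measure ℝ) := hcf.toLp _ with hF
  set G : Lp ℂ 2 (volume : Measure ℝ) := hg2.toLp g with hG
  set τ : ℝ → C(ℝ, ℝ) := fun t => ⟨fun x => x - t, by continuity⟩ with hτ
  have hτm : ∀ t, MeasurePreserving (τ t) volume volume := fun t =>
    measurePreserving_sub_right volume t
  have hτc : Continuous τ := by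
    apply ContinuousMap.continuous_of_continuous_uncurry
    exact continuous_snd.sub continuous_fst
  set Gt : ℝ → Lp ℂ 2 (volume : Measure ℝ) :=
    fun t => Lp.compMeasurePreserving (τ t) (hτm t) G with hGt
  have hGtc : Continuous Gt := by
    rw [continuous_iff_continuousAt]
    intro t
    exact ContinuousAt.compMeasurePreservingLp continuousAt_const hτc.continuousAt hτm
      (by norm_num)
  have key : ∀ t : ℝ, (inner ℂ (F) (Gt t) : ℂ) = ∫ x : ℝ, f x * g (x - t) := by
    intro t
    rw [MeasureTheory.L2.inner_def]
    apply integral_congr_ae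
    have h1 : (↑↑F : ℝ → ℂ) =ᵐ[volume] fun x => conj (f x) := MemLp.coeFn_toLp _
    have h2 : (↑↑(Gt t) : ℝ → ℂ) =ᵐ[volume] (↑↑G : ℝ → ℂ) ∘ (τ t) :=
      Lp.coeFn_compMeasurePreserving G (hτm t)
    have h3 : ((↑↑G : ℝ → ℂ) ∘ (τ t)) =ᵐ[volume] (g ∘ (τ t)) :=
      (hτm t).quasiMeasurePreserving.ae_eq_comp (MemLp.coeFn_toLp _)
    filter_upwards [h1, h2, h3] with x hx1 hx2 hx3
    simp only [RCLike.inner_apply, hx1, hx2, Function.comp_apply] at *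
    rw [hx3]
    simp [τ, mul_comm]
  have : (fun t : ℝ => ∫ x : ℝ, f x * g (x - t)) = fun t => (inner ℂ F (Gt t) : ℂ) := by
    ext t; rw [key]
  rw [this]
  exact Continuous.inner continuous_const hGtc

/-- The Fourier transform of `t ↦ ∫ f x * g (x - t)` is `ξ ↦ 𝓕 f ξ * 𝓕 g (-ξ)`. -/
lemma fourier_conv_aux (f g : ℝ → ℂ) (hf1 : Integrable f) (hg1 : Integrable g) (ξ : ℝ) :
    𝓕 (fun t : ℝ => ∫ x : ℝ, f x * g (x - t)) ξ = 𝓕 f ξ * 𝓕 g (-ξ) := by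
  set e : ℝ → ℂ := fun s => Complex.exp (↑(-2 * π * s * ξ) * I) with he
  have hec : Continuous e := by
    apply Complex.continuous_exp.comp
    exact (Complex.continuous_ofReal.comp (by continuity)).mul continuous_const
  have hebound : ∀ s, ‖e s‖ = 1 := fun s => Complex.norm_exp_ofReal_mul_I _
  have base : Integrable (fun p : ℝ × ℝ => f p.2 * g (p.2 - p.1))
      ((volume : Measure ℝ).prod volume) := by
    have := hf1.convolution_integrand (ContinuousLinearMap.mul ℝ ℂ) hg1.comp_neg
    simpa [neg_sub] using this
  have hint : Integrable (fun p : ℝ × ℝ => e p.1 * (f p.2 * g (p.2 - p.1)))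
      ((volume : Measure ℝ).prod volume) :=
    base.bdd_mul ((hec.comp continuous_fst).aestronglyMeasurable)
      (c := 1) (Filter.Eventually.of_forall fun p => le_of_eq (hebound p.1))
  rw [Real.fourier_real_eq_integral_exp_smul]
  calc
    ∫ t : ℝ, Complex.exp (↑(-2 * π * t * ξ) * I) • ∫ x : ℝ, f x * g (x - t)
        = ∫ t : ℝ, ∫ x : ℝ, e t * (f x * g (x - t)) := by
      congr 1; ext t
      rw [smul_eq_mul, ← integral_const_mul]
    _ = ∫ x : ℝ, ∫ t : ℝ, e t * (f x * g (x - t)) :=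
      MeasureTheory.integral_integral_swap hint
    _ = ∫ x : ℝ, f x * (e x * 𝓕 g (-ξ)) := by
      congr 1; ext x
      have step1 : ∫ t : ℝ, e t * (f x * g (x - t)) = f x * ∫ t : ℝ, e t * g (x - t) := by
        simp_rw [show ∀ t : ℝ, e t * (f x * g (x - t)) = f x * (e t * g (x - t)) from
          fun t => by ring]
        rw [integral_const_mul]
      rw [step1]
      congr 1
      have step2 : ∫ t : ℝ, e t * g (x - t) = ∫ u : ℝ, e (x - u) * g (x - (x - u)) :=
        (MeasureTheory.integral_sub_left_eq_self (fun t => e t * g (x - t)) volume x).symm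
      rw [step2]
      have step3 : ∀ u : ℝ, e (x - u) * g (x - (x - u))
          = e x * (Complex.exp (↑(-2 * π * u * (-ξ)) * I) * g u) := by
        intro u
        have : e (x - u) = e x * Complex.exp (↑(-2 * π * u * (-ξ)) * I) := by
          rw [he]; dsimp only
          rw [← Complex.exp_add]
          congr 1
          push_cast
          ring
        rw [this]
        simp [mul_assoc]
      simp_rw [step3]
      rw [integral_const_mul]
      congr 1
      rw [Real.fourier_real_eq_integral_exp_smul]
      simp [smul_eq_mul]
    _ = 𝓕 f ξ * 𝓕 g (-ξ) := by
      simp_rw [show ∀ x : ℝ, f x * (e x * 𝓕 g (-ξ)) = (e x * f x) * 𝓕 g (-ξ) from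
        fun x => by ring]
      rw [integral_mul_const]
      congr 1
      rw [Real.fourier_real_eq_integral_exp_smul]
      simp [smul_eq_mul, he]

end Aux

/-- If `f` and `g` are in `L²(ℝ)` (and integrable, so that their Fourier
transforms are defined pointwise) and both have Fourier transforms supported in `(-∞, 0]`,
then `∫ f(α) g(α) dα = 0`. -/
theorem integral_mul_eq_zero_of_holomorphic
    (f g : ℝ → ℂ)
    (hf1 : Integrable f) (hf2 : MemLp f 2 (volume : Measure ℝ))
    (hg1 : Integrable g) (hg2 : MemLp g 2 (volume : Measure ℝ))
    (hfsupp : Function.support (𝓕 f) ⊆ Set.Iic (0 : ℝ))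
    (hgsupp : Function.support (𝓕 g) ⊆ Set.Iic (0 : ℝ)) :
    ∫ α : ℝ, f α * g α = 0 := by
  set H : ℝ → ℂ := fun t => ∫ x : ℝ, f x * g (x - t) with hH
  have hHconv : H = MeasureTheory.convolution f (fun y => g (-y))
      (ContinuousLinearMap.mul ℝ ℂ) volume := by
    ext t
    rw [hH, MeasureTheory.convolution_def]
    simp [neg_sub]
  have hH1 : Integrable H := by
    rw [hHconv]
    exact hf1.integrable_convolution _ hg1.comp_neg
  have hHcont : Continuous H := continuous_pairing_aux f g hf2 hg2
  have hFour : ∀ ξ : ℝ, 𝓕 H ξ = 𝓕 f ξ * 𝓕 g (-ξ) := by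
    intro ξ
    rw [hH]
    exact fourier_conv_aux f g hf1 hg1 ξ
  have h0 : ∀ ξ : ℝ, ξ ≠ 0 → 𝓕 H ξ = 0 := by
    intro ξ hξ
    rw [hFour]
    rcases hξ.lt_or_gt with h | h
    · have hg0 : 𝓕 g (-ξ) = 0 := by
        by_contra hc
        have := hgsupp (Function.mem_support.2 hc)
        simp only [Set.mem_Iic] at this
        linarith
      rw [hg0, mul_zero]
    · have hf0 : 𝓕 f ξ = 0 := by
        by_contra hc
        have := hfsupp (Function.mem_support.2 hc)
        simp only [Set.mem_Iic] at this
        linarith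
      rw [hf0, zero_mul]
  have hae : 𝓕 H =ᵐ[(volume : Measure ℝ)] 0 := by
    refine ae_iff.2 (measure_mono_null ?_ (measure_singleton (0:ℝ)))
    intro ξ hξ
    simp only [Set.mem_setOf_eq, Pi.zero_apply] at hξ
    simp only [Set.mem_singleton_iff]
    by_contra h0'
    exact hξ (h0 ξ h0')
  have h𝓕int : Integrable (𝓕 H) := (integrable_zero _ _ _).congr hae.symm
  have hinv : 𝓕⁻ (𝓕 H) 0 = H 0 :=
    hH1.fourierInv_fourier_eq h𝓕int (hHcont.continuousAt (x := 0))
  have hzero : 𝓕⁻ (𝓕 H) 0 = 0 := by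
    rw [Real.fourierInv_eq]
    apply integral_eq_zero_of_ae
    filter_upwards [hae] with v hv
    rw [hv]
    simp
  have hH0 : H 0 = 0 := by rw [← hinv, hzero]
  rw [hH] at hH0
  simpa using hH0
end

section
/- Let R and Y be Schwartz functions on ℝ whose Fourier transforms are supported in (-∞,0), and set b := P[R(1-\bar{Y})] + \bar{P}[\bar{R}(1-Y)], where P projects to frequencies ξ ≤ 0 and \bar{P} = I - P. Then (1-\bar{Y}) R_α + (1-Y)\bar{R}_α - b_α = \bar{P}[\bar{R} Y_α - R_α \bar{Y}] + P[R \bar{Y}_α - \bar{R}_α Y]. -/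
open MeasureTheory Complex
open scoped FourierTransform

/-- The projection `P` onto negative frequencies. -/
noncomputable def Pproj (u : ℝ → ℂ) : ℝ → ℂ := fun x =>
  𝓕⁻ (fun ξ => Set.indicator (Set.Iic (0 : ℝ)) (fun _ => (1 : ℂ)) ξ * 𝓕 u ξ) x

/-- The complementary projection `P̄ = I - P`. -/
noncomputable def Pbarproj (u : ℝ → ℂ) : ℝ → ℂ := fun x => u x - Pproj u x

namespace MHelp

open SchwartzMap


noncomputable def chi : ℝ → ℂ := Set.indicator (Set.Iic (0:ℝ)) (fun _ => (1:ℂ))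

lemma chi_norm_le (ξ : ℝ) : ‖chi ξ‖ ≤ 1 := by
  by_cases h : ξ ∈ Set.Iic (0:ℝ) <;> simp [chi, Set.indicator_apply, h]

lemma chi_meas : Measurable chi := measurable_const.indicator measurableSet_Iic

lemma schwartzHTG (f : 𝓢(ℝ, ℂ)) : Function.HasTemperateGrowth ⇑f := by
  refine ⟨f.smooth', fun n => ?_⟩
  obtain ⟨C, hC⟩ := f.decay' 0 n
  exact ⟨0, C, fun x => by have := hC x; rw [pow_zero, one_mul] at this; rw [pow_zero, mul_one]; exact this⟩

noncomputable def mulS (f g : 𝓢(ℝ, ℂ)) : 𝓢(ℝ, ℂ) :=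
  bilinLeftCLM (ContinuousLinearMap.mul ℝ ℂ) (schwartzHTG g) f

@[simp] lemma mulS_apply (f g : 𝓢(ℝ, ℂ)) (x : ℝ) : mulS f g x = f x * g x := rfl

noncomputable def conjS (f : 𝓢(ℝ, ℂ)) : 𝓢(ℝ, ℂ) :=
  bilinLeftCLM ((ContinuousLinearMap.mul ℝ ℂ).comp Complex.conjCLE.toContinuousLinearMap)
    (Function.HasTemperateGrowth.const (1:ℂ)) f

@[simp] lemma conjS_apply (f : 𝓢(ℝ, ℂ)) (x : ℝ) :
    conjS f x = (starRingEnd ℂ) (f x) := by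
  show (ContinuousLinearMap.mul ℝ ℂ) (Complex.conjCLE (f x)) 1 = _
  simp

lemma FT_int (u : 𝓢(ℝ, ℂ)) : Integrable (𝓕 ⇑u) :=
  (SchwartzMap.fourierTransformCLM ℝ u).integrable

lemma FT_smul_int (u : 𝓢(ℝ, ℂ)) : Integrable (fun ξ : ℝ => ξ • 𝓕 ⇑u ξ) := by
  have h1 : Integrable (fun ξ : ℝ => ‖ξ‖ ^ 1 * ‖𝓕 ⇑u ξ‖) :=
    (SchwartzMap.fourierTransformCLM ℝ u).integrable_pow_mul volume 1
  refine h1.mono' ?_ (Filter.Eventually.of_forall fun ξ => ?_)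
  · exact (continuous_id.smul (SchwartzMap.fourierTransformCLM ℝ u).continuous).aestronglyMeasurable
  · simp [norm_smul]

/-- The multiplier on the Fourier side. -/
noncomputable def PF (u : ℝ → ℂ) : ℝ → ℂ := fun ξ => chi ξ * 𝓕 u ξ

lemma Pproj_eq (u : ℝ → ℂ) : Pproj u = 𝓕⁻ (PF u) := rfl

lemma PF_int (u : 𝓢(ℝ, ℂ)) : Integrable (PF ⇑u) :=
  (FT_int u).bdd_mul chi_meas.aestronglyMeasurable (Filter.Eventually.of_forall chi_norm_le)

lemma PF_smul_int (u : 𝓢(ℝ, ℂ)) : Integrable (fun ξ : ℝ => ξ • PF ⇑u ξ) := by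
  have : (fun ξ : ℝ => ξ • PF ⇑u ξ) = fun ξ => chi ξ * (ξ • 𝓕 ⇑u ξ) := by
    funext ξ
    simp only [PF, Complex.real_smul]
    ring
  rw [this]
  exact (FT_smul_int u).bdd_mul chi_meas.aestronglyMeasurable (Filter.Eventually.of_forall chi_norm_le)

lemma F_add {w1 w2 : ℝ → ℂ} (h1 : Integrable w1) (h2 : Integrable w2) (ξ : ℝ) :
    𝓕 (fun v => w1 v + w2 v) ξ = 𝓕 w1 ξ + 𝓕 w2 ξ := by
  have := VectorFourier.fourierIntegral_add (E := ℂ) (L := innerₗ ℝ)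
    Real.continuous_fourierChar (by exact continuous_inner) h1 h2
  exact congrFun this ξ

lemma F_neg (w : ℝ → ℂ) (ξ : ℝ) : 𝓕 (fun v => -(w v)) ξ = -(𝓕 w ξ) := by
  simp [Real.fourier_eq, smul_neg, integral_neg]

lemma Finv_add {w1 w2 : ℝ → ℂ} (h1 : Integrable w1) (h2 : Integrable w2) (x : ℝ) :
    𝓕⁻ (fun v => w1 v + w2 v) x = 𝓕⁻ w1 x + 𝓕⁻ w2 x := by
  rw [Real.fourierInv_eq_fourier_neg, Real.fourierInv_eq_fourier_neg,
    Real.fourierInv_eq_fourier_neg]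
  exact F_add h1 h2 (-x)

lemma Finv_neg (w : ℝ → ℂ) (x : ℝ) : 𝓕⁻ (fun v => -(w v)) x = -(𝓕⁻ w x) := by
  rw [Real.fourierInv_eq_fourier_neg, Real.fourierInv_eq_fourier_neg]
  exact F_neg w (-x)


lemma P_add (u v : 𝓢(ℝ, ℂ)) (x : ℝ) :
    Pproj (fun y => u y + v y) x = Pproj ⇑u x + Pproj ⇑v x := by
  have hF : 𝓕 (fun y => u y + v y) = fun ξ => 𝓕 ⇑u ξ + 𝓕 ⇑v ξ :=
    funext (F_add u.integrable v.integrable)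
  have : Pproj (fun y => u y + v y) x
      = 𝓕⁻ (fun ξ => PF ⇑u ξ + PF ⇑v ξ) x := by
    show 𝓕⁻ (fun ξ => chi ξ * 𝓕 (fun y => u y + v y) ξ) x = _
    rw [hF]
    refine congrArg (fun h : ℝ → ℂ => (𝓕⁻ h : ℝ → ℂ) x) ?_
    funext ξ
    simp [PF, mul_add]
  rw [this, Finv_add (PF_int u) (PF_int v) x]
  rfl

lemma P_neg (u : ℝ → ℂ) (x : ℝ) :
    Pproj (fun y => -(u y)) x = -(Pproj u x) := by
  have hF : 𝓕 (fun y => -(u y)) = fun ξ => -(𝓕 u ξ) := funext (F_neg u)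
  have : Pproj (fun y => -(u y)) x = 𝓕⁻ (fun ξ => -(PF u ξ)) x := by
    show 𝓕⁻ (fun ξ => chi ξ * 𝓕 (fun y => -(u y)) ξ) x = _
    rw [hF]
    refine congrArg (fun h : ℝ → ℂ => (𝓕⁻ h : ℝ → ℂ) x) ?_
    funext ξ
    simp [PF]
  rw [this, Finv_neg]
  rfl

lemma F_sub {w1 w2 : ℝ → ℂ} (h1 : Integrable w1) (h2 : Integrable w2) (ξ : ℝ) :
    𝓕 (fun v => w1 v - w2 v) ξ = 𝓕 w1 ξ - 𝓕 w2 ξ := by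
  have : (fun v => w1 v - w2 v) = fun v => w1 v + (fun z => -(w2 z)) v := by
    funext v; ring
  rw [this, F_add (w2 := fun z => -(w2 z)) h1 h2.neg, F_neg]
  ring

lemma Finv_sub {w1 w2 : ℝ → ℂ} (h1 : Integrable w1) (h2 : Integrable w2) (x : ℝ) :
    𝓕⁻ (fun v => w1 v - w2 v) x = 𝓕⁻ w1 x - 𝓕⁻ w2 x := by
  rw [Real.fourierInv_eq_fourier_neg, Real.fourierInv_eq_fourier_neg,
    Real.fourierInv_eq_fourier_neg]
  exact F_sub h1 h2 (-x)

lemma P_sub (u v : 𝓢(ℝ, ℂ)) (x : ℝ) :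
    Pproj (fun y => u y - v y) x = Pproj ⇑u x - Pproj ⇑v x := by
  have hF : 𝓕 (fun y => u y - v y) = fun ξ => 𝓕 ⇑u ξ - 𝓕 ⇑v ξ :=
    funext (F_sub u.integrable v.integrable)
  have : Pproj (fun y => u y - v y) x
      = 𝓕⁻ (fun ξ => PF ⇑u ξ - PF ⇑v ξ) x := by
    show 𝓕⁻ (fun ξ => chi ξ * 𝓕 (fun y => u y - v y) ξ) x = _
    rw [hF]
    refine congrArg (fun h : ℝ → ℂ => (𝓕⁻ h : ℝ → ℂ) x) ?_
    funext ξ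
    simp [PF, mul_sub]
  rw [this, Finv_sub (PF_int u) (PF_int v) x]
  rfl

lemma Finv_zero (x : ℝ) : 𝓕⁻ (fun _ : ℝ => (0:ℂ)) x = 0 := by
  simp [Real.fourierInv_eq]

/-- If the Fourier transform vanishes on positive frequencies, `P` acts as the identity. -/
lemma P_self (u : 𝓢(ℝ, ℂ)) (h : ∀ ξ : ℝ, 0 < ξ → 𝓕 ⇑u ξ = 0) (x : ℝ) :
    Pproj ⇑u x = u x := by
  have hPF : PF ⇑u = 𝓕 ⇑u := by
    funext ξ
    rcases le_or_gt ξ 0 with hξ | hξ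
    · simp [PF, chi, Set.indicator_apply, hξ]
    · simp [PF, h ξ hξ]
  rw [Pproj_eq, hPF]
  exact u.continuous.fourierInv_fourier_eq u.integrable (FT_int u) ▸
    congrFun (u.continuous.fourierInv_fourier_eq u.integrable (FT_int u)) x

/-- If the Fourier transform vanishes on nonpositive frequencies, `P` kills the function. -/
lemma P_zero (u : 𝓢(ℝ, ℂ)) (h : ∀ ξ : ℝ, ξ ≤ 0 → 𝓕 ⇑u ξ = 0) (x : ℝ) :
    Pproj ⇑u x = 0 := by
  have hPF : PF ⇑u = fun _ => (0:ℂ) := by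
    funext ξ
    rcases le_or_gt ξ 0 with hξ | hξ
    · simp [PF, h ξ hξ]
    · simp [PF, chi, Set.indicator_apply, hξ.not_ge]
  rw [Pproj_eq, hPF]
  exact Finv_zero x

/-- Fourier transform of the conjugate. -/
lemma FT_conj (u : ℝ → ℂ) (ξ : ℝ) :
    𝓕 (fun x => (starRingEnd ℂ) (u x)) ξ = (starRingEnd ℂ) (𝓕 u (-ξ)) := by
  rw [Real.fourier_real_eq_integral_exp_smul, Real.fourier_real_eq_integral_exp_smul,
    ← integral_conj]
  congr 1
  funext v
  rw [smul_eq_mul, smul_eq_mul, map_mul, ← Complex.exp_conj]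
  congr 2
  simp [Complex.ext_iff]

lemma derivS_coe (u : 𝓢(ℝ, ℂ)) : ⇑(derivCLM ℝ ℂ u) = deriv ⇑u := rfl

lemma FT_derivS (u : 𝓢(ℝ, ℂ)) :
    𝓕 ⇑(derivCLM ℝ ℂ u) = fun ξ : ℝ => (2 * Real.pi * Complex.I * ξ) • 𝓕 ⇑u ξ := by
  rw [derivS_coe]
  exact Real.fourier_deriv u.integrable u.differentiable
    ((derivCLM ℝ ℂ u).integrable)

/-- `P` commutes with the derivative on Schwartz functions. -/
lemma P_hasDerivAt (u : 𝓢(ℝ, ℂ)) (x : ℝ) :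
    HasDerivAt (Pproj ⇑u) (Pproj ⇑(derivCLM ℝ ℂ u) x) x := by
  have hfun : Pproj ⇑u = fun y => 𝓕 (PF ⇑u) (-y) :=
    funext fun y => Real.fourierInv_eq_fourier_neg _ _
  have hd := Real.hasDerivAt_fourier (PF_int u) (PF_smul_int u) (-x)
  have hneg : HasDerivAt (fun y : ℝ => -y) (-1 : ℝ) x := (hasDerivAt_id x).neg
  have comp : HasDerivAt (fun y : ℝ => 𝓕 (PF ⇑u) (-y))
      ((-1 : ℝ) • 𝓕 (fun ξ : ℝ => (-2 * Real.pi * Complex.I * ξ) • PF ⇑u ξ) (-x)) x :=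
    HasDerivAt.scomp x hd hneg
  rw [hfun]
  convert comp using 1
  -- it remains to identify the derivative values
  have hval : Pproj ⇑(derivCLM ℝ ℂ u) x
      = 𝓕⁻ (fun ξ : ℝ => -((-2 * Real.pi * Complex.I * (ξ:ℂ)) • PF ⇑u ξ)) x := by
    show 𝓕⁻ (fun ξ => chi ξ * 𝓕 ⇑(derivCLM ℝ ℂ u) ξ) x = _
    rw [FT_derivS]
    refine congrArg (fun h : ℝ → ℂ => (𝓕⁻ h : ℝ → ℂ) x) ?_
    funext ξ
    simp only [PF, smul_eq_mul]
    ring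
  rw [hval, Finv_neg, Real.fourierInv_eq_fourier_neg]
  simp

lemma P_add' (u v : 𝓢(ℝ, ℂ)) (x : ℝ) :
    Pproj ⇑(u + v) x = Pproj ⇑u x + Pproj ⇑v x := by
  have : ⇑(u + v) = fun y => u y + v y := funext fun y => SchwartzMap.add_apply u v y
  rw [this]
  exact P_add u v x

lemma hasDerivAt_conj (u : 𝓢(ℝ, ℂ)) (y : ℝ) :
    HasDerivAt (fun z => (starRingEnd ℂ) (u z)) ((starRingEnd ℂ) (deriv ⇑u y)) y := by
  have h := u.differentiableAt.hasDerivAt (x := y)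
  have h2 := Complex.conjCLE.toContinuousLinearMap.hasFDerivAt.comp_hasDerivAt y h
  simp at h2; exact h2

lemma deriv_conjS (u : 𝓢(ℝ, ℂ)) (y : ℝ) :
    deriv ⇑(conjS u) y = (starRingEnd ℂ) (deriv ⇑u y) := by
  have : ⇑(conjS u) = fun z => (starRingEnd ℂ) (u z) := funext (conjS_apply u)
  rw [this]
  exact (hasDerivAt_conj u y).deriv

end MHelp

open MHelp SchwartzMap in
/-- Let `R` and `Y` be Schwartz functions on `ℝ` with Fourier transforms
supported in `(-∞,0)`, and set `b := P[R(1-Ȳ)] + P̄[R̄(1-Y)]`. Then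
`(1-Ȳ) R_α + (1-Y) R̄_α - b_α = P̄[R̄ Y_α - R_α Ȳ] + P[R Ȳ_α - R̄_α Y]`:
the projected form of the auxiliary function `M`. -/
theorem M_projected_identity
    (R Y : SchwartzMap ℝ ℂ)
    (hRsupp : Function.support (𝓕 (⇑R)) ⊆ Set.Iio (0 : ℝ))
    (hYsupp : Function.support (𝓕 (⇑Y)) ⊆ Set.Iio (0 : ℝ)) :
    ∀ α : ℝ,
      (1 - (starRingEnd ℂ) (Y α)) * deriv (⇑R) α +
        (1 - Y α) * (starRingEnd ℂ) (deriv (⇑R) α) -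
        deriv (fun x =>
          Pproj (fun y => R y * (1 - (starRingEnd ℂ) (Y y))) x +
            Pbarproj (fun y => (starRingEnd ℂ) (R y) * (1 - Y y)) x) α
      = Pbarproj (fun x => (starRingEnd ℂ) (R x) * deriv (⇑Y) x -
            deriv (⇑R) x * (starRingEnd ℂ) (Y x)) α +
          Pproj (fun x => R x * (starRingEnd ℂ) (deriv (⇑Y) x) -
            (starRingEnd ℂ) (deriv (⇑R) x) * Y x) α := by
  intro α
  have hR0 : ∀ ξ : ℝ, 0 ≤ ξ → 𝓕 ⇑R ξ = 0 := fun ξ hξ => by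
    by_contra h
    exact (not_lt.mpr hξ) (Set.mem_Iio.mp (hRsupp (Function.mem_support.mpr h)))
  set Rc := conjS R with hRcdef
  set Yc := conjS Y with hYcdef
  set R' := derivCLM ℝ ℂ R with hR'def
  set Y' := derivCLM ℝ ℂ Y with hY'def
  set Rc' := derivCLM ℝ ℂ Rc with hRc'def
  set Yc' := derivCLM ℝ ℂ Yc with hYc'def
  set f := R - mulS R Yc with hfdef
  set g := Rc - mulS Rc Y with hgdef
  -- rewrite the two lambdas inside `b` as Schwartz maps
  have hlam1 : (fun y => R y * (1 - (starRingEnd ℂ) (Y y))) = ⇑f := by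
    funext y
    simp [hfdef, SchwartzMap.sub_apply, mul_one_sub, hYcdef, conjS_apply]
  have hlam2 : (fun y => (starRingEnd ℂ) (R y) * (1 - Y y)) = ⇑g := by
    funext y
    simp [hgdef, SchwartzMap.sub_apply, mul_one_sub, hRcdef, conjS_apply]
  rw [hlam1, hlam2]
  -- pointwise derivatives of f and g
  have hf_pt : ∀ y, deriv ⇑f y =
      deriv ⇑R y - (deriv ⇑R y * (starRingEnd ℂ) (Y y) + R y * (starRingEnd ℂ) (deriv ⇑Y y)) := by
    intro y
    have hfz : ⇑f = fun z => R z - R z * (starRingEnd ℂ) (Y z) := by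
      funext z; simp [hfdef, SchwartzMap.sub_apply, hYcdef, conjS_apply]
    rw [hfz]
    exact ((R.differentiableAt.hasDerivAt).sub
      ((R.differentiableAt.hasDerivAt).mul (hasDerivAt_conj Y y))).deriv
  have hg_pt : ∀ y, deriv ⇑g y =
      (starRingEnd ℂ) (deriv ⇑R y) -
        ((starRingEnd ℂ) (deriv ⇑R y) * Y y + (starRingEnd ℂ) (R y) * deriv ⇑Y y) := by
    intro y
    have hgz : ⇑g = fun z => (starRingEnd ℂ) (R z) - (starRingEnd ℂ) (R z) * Y z := by
      funext z; simp [hgdef, SchwartzMap.sub_apply, hRcdef, conjS_apply]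
    rw [hgz]
    exact ((hasDerivAt_conj R y).sub
      ((hasDerivAt_conj R y).mul (Y.differentiableAt.hasDerivAt))).deriv
  -- derivative of the projected part
  have hb : deriv (fun x => Pproj ⇑f x + Pbarproj ⇑g x) α =
      Pproj ⇑(derivCLM ℝ ℂ f) α + (deriv ⇑g α - Pproj ⇑(derivCLM ℝ ℂ g) α) := by
    have h1 := P_hasDerivAt f α
    have h2 := P_hasDerivAt g α
    have h3 : HasDerivAt ⇑g (deriv ⇑g α) α := g.differentiableAt.hasDerivAt
    have h4 := h1.add (h3.sub h2)
    simp only [Pbarproj]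
    exact h4.deriv
  rw [hb]
  -- identify derivCLM f and derivCLM g with sums of products
  have hf'c : ⇑(derivCLM ℝ ℂ f) = fun y => R' y - (mulS R' Yc + mulS R Yc') y := by
    funext y
    have : (mulS R' Yc + mulS R Yc') y =
        deriv ⇑R y * (starRingEnd ℂ) (Y y) + R y * (starRingEnd ℂ) (deriv ⇑Y y) := by
      simp [SchwartzMap.add_apply, hR'def, hYc'def, hYcdef, SchwartzMap.derivCLM_apply, deriv_conjS, conjS_apply]
    rw [SchwartzMap.derivCLM_apply, hf_pt y, this]
    rfl
  have hg'c : ⇑(derivCLM ℝ ℂ g) = fun y => Rc' y - (mulS Rc' Y + mulS Rc Y') y := by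
    funext y
    have : (mulS Rc' Y + mulS Rc Y') y =
        (starRingEnd ℂ) (deriv ⇑R y) * Y y + (starRingEnd ℂ) (R y) * deriv ⇑Y y := by
      simp [SchwartzMap.add_apply, hRc'def, hY'def, SchwartzMap.derivCLM_apply, deriv_conjS,
        hRcdef, conjS_apply]
    rw [SchwartzMap.derivCLM_apply, hg_pt y, this]
    simp [hRc'def, SchwartzMap.derivCLM_apply, deriv_conjS, hRcdef, conjS_apply]
  rw [hf'c, hg'c, P_sub R' (mulS R' Yc + mulS R Yc') α, P_sub Rc' (mulS Rc' Y + mulS Rc Y') α,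
    P_add', P_add']
  -- the right-hand side lambdas
  have hlam3 : (fun x => (starRingEnd ℂ) (R x) * deriv ⇑Y x -
      deriv ⇑R x * (starRingEnd ℂ) (Y x)) = fun x => (mulS Rc Y') x - (mulS R' Yc) x := by
    funext x
    simp [hRcdef, hR'def, hY'def, hYcdef, SchwartzMap.derivCLM_apply, conjS_apply]
  have hlam4 : (fun x => R x * (starRingEnd ℂ) (deriv ⇑Y x) -
      (starRingEnd ℂ) (deriv ⇑R x) * Y x) = fun x => (mulS R Yc') x - (mulS Rc' Y) x := by
    funext x
    simp [hRc'def, hYc'def, SchwartzMap.derivCLM_apply, deriv_conjS, hRcdef, hYcdef, conjS_apply]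
  simp only [Pbarproj]
  rw [hlam3, hlam4, P_sub (mulS Rc Y') (mulS R' Yc) α, P_sub (mulS R Yc') (mulS Rc' Y) α]
  -- `P` fixes `R'` and annihilates `Rc'`
  have hPR' : Pproj ⇑R' α = deriv ⇑R α := by
    have hsupp : ∀ ξ : ℝ, 0 < ξ → 𝓕 ⇑R' ξ = 0 := by
      intro ξ hξ
      rw [hR'def, FT_derivS]
      simp [hR0 ξ hξ.le]
    rw [P_self R' hsupp α, hR'def, SchwartzMap.derivCLM_apply]
  have hPRc' : Pproj ⇑Rc' α = 0 := by
    have hcoe : ⇑Rc' = fun y => (starRingEnd ℂ) (⇑R' y) := by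
      funext y
      rw [hRc'def, SchwartzMap.derivCLM_apply, deriv_conjS, hR'def, SchwartzMap.derivCLM_apply]
    have hsupp : ∀ ξ : ℝ, ξ ≤ 0 → 𝓕 ⇑Rc' ξ = 0 := by
      intro ξ hξ
      rw [hcoe, FT_conj, hR'def, FT_derivS]
      simp [hR0 (-ξ) (by linarith)]
    exact P_zero Rc' hsupp α
  rw [hPR', hPRc', hg_pt α]
  ring
end
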